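/- arXiv:1905.07126 — 2 statements merged into one kernel-verified Lean document; each statement's English description precedes it below -/
import Mathlib

section
/- Let h ≥ 1 and let ν : {1,…,h} → {0,1}. For the admissible arrowed binary sequence attached to ν and indices i, j ∈ {1,…,h} with b(i) ≠ b(j), one has b(i) < b(j) if and only if i < j. -/
open scoped Classical
noncomputable section

/-- `d = #{i ∈ {1,…,h} : ν(i) = 0}`. -/
def dzero (h : ℕ) (ν : ℕ → ℕ) : ℕ :=
  ((Finset.Icc 1 h).filter (fun i => ν i = 0)).card

/-- The bijection `π` of `{1,…,h}` attached to `ν`: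
`π(i) = #{l ≤ i : ν(l) = 0}` if `ν(i) = 0`, and `π(i) = d + #{l ≤ i : ν(l) = 1}` otherwise. -/
def piOf (h : ℕ) (ν : ℕ → ℕ) (i : ℕ) : ℕ :=
  if ν i = 0 then ((Finset.Icc 1 i).filter (fun l => ν l = 0)).card
  else dzero h ν + ((Finset.Icc 1 i).filter (fun l => ν l = 1)).card

variable (h : ℕ) (ν : ℕ → ℕ)

lemma dzero_add (hν : ∀ i, 1 ≤ i → i ≤ h → ν i = 0 ∨ ν i = 1) :
    dzero h ν + ((Finset.Icc 1 h).filter (fun l => ν l = 1)).card = h := by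
  have : ((Finset.Icc 1 h).filter (fun l => ν l = 1)) =
      ((Finset.Icc 1 h).filter (fun l => ¬ ν l = 0)) := by
    apply Finset.filter_congr
    intro x hx
    simp only [Finset.mem_Icc] at hx
    rcases hν x hx.1 hx.2 with h0 | h1 <;> simp [*]
  rw [dzero, this, Finset.card_filter_add_card_filter_not]
  simp [Nat.card_Icc]

lemma piOf_le_d {l : ℕ} (hl1 : 1 ≤ l) (hl2 : l ≤ h) (h0 : ν l = 0) :
    1 ≤ piOf h ν l ∧ piOf h ν l ≤ dzero h ν := by
  rw [piOf, if_pos h0]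
  constructor
  · rw [Nat.one_le_iff_ne_zero, ← Nat.pos_iff_ne_zero, Finset.card_pos]
    exact ⟨l, by simp [Finset.mem_filter, Finset.mem_Icc, hl1, h0]⟩
  · exact Finset.card_le_card (Finset.filter_subset_filter _ (Finset.Icc_subset_Icc_right hl2))

lemma d_lt_piOf {l : ℕ} (hl1 : 1 ≤ l) (hl2 : l ≤ h) (h1 : ν l = 1) :
    dzero h ν < piOf h ν l ∧ piOf h ν l ≤ dzero h ν + ((Finset.Icc 1 h).filter (fun l => ν l = 1)).card := by
  rw [piOf, if_neg (by simp [h1])]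
  constructor
  · have : 0 < ((Finset.Icc 1 l).filter (fun l => ν l = 1)).card := by
      rw [Finset.card_pos]
      exact ⟨l, by simp [Finset.mem_filter, Finset.mem_Icc, hl1, h1]⟩
    omega
  · have := Finset.card_le_card (Finset.filter_subset_filter (fun l => ν l = 1) (Finset.Icc_subset_Icc_right (a := 1) hl2))
    omega

lemma piOf_mem (hν : ∀ i, 1 ≤ i → i ≤ h → ν i = 0 ∨ ν i = 1)
    {l : ℕ} (hl1 : 1 ≤ l) (hl2 : l ≤ h) : 1 ≤ piOf h ν l ∧ piOf h ν l ≤ h := by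
  rcases hν l hl1 hl2 with h0 | h1
  · have := piOf_le_d h ν hl1 hl2 h0
    have hd : dzero h ν ≤ h := le_trans (Finset.card_le_card (Finset.filter_subset _ _)) (by simp [Nat.card_Icc])
    omega
  · have := d_lt_piOf h ν hl1 hl2 h1
    have := dzero_add h ν hν
    omega

lemma piOf_mono {l1 l2 : ℕ} (hle : l1 ≤ l2) (hc : ν l1 = 0 ↔ ν l2 = 0) :
    piOf h ν l1 ≤ piOf h ν l2 := by
  by_cases h0 : ν l1 = 0
  · rw [piOf, piOf, if_pos h0, if_pos (hc.mp h0)]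
    exact Finset.card_le_card (Finset.filter_subset_filter _ (Finset.Icc_subset_Icc_right hle))
  · rw [piOf, piOf, if_neg h0, if_neg (fun hx => h0 (hc.mpr hx))]
    exact Nat.add_le_add_left (Finset.card_le_card (Finset.filter_subset_filter _ (Finset.Icc_subset_Icc_right hle))) _

lemma piOf_strict_mono (hν : ∀ i, 1 ≤ i → i ≤ h → ν i = 0 ∨ ν i = 1)
    {l1 l2 : ℕ} (hl1 : 1 ≤ l1) (hl2h : l2 ≤ h) (hlt : l1 < l2) (hc : ν l1 = 0 ↔ ν l2 = 0) :
    piOf h ν l1 < piOf h ν l2 := by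
  by_cases h0 : ν l1 = 0
  · rw [piOf, piOf, if_pos h0, if_pos (hc.mp h0)]
    apply Finset.card_lt_card
    constructor
    · exact Finset.filter_subset_filter _ (Finset.Icc_subset_Icc_right hlt.le)
    · intro hsub
      have : l2 ∈ (Finset.Icc 1 l2).filter (fun l => ν l = 0) := by
        simp [Finset.mem_Icc, hc.mp h0, le_trans hl1 hlt.le]
      have := hsub this
      simp only [Finset.mem_filter, Finset.mem_Icc] at this
      omega
  · have h1' : ¬ ν l2 = 0 := fun hx => h0 (hc.mpr hx)
    rw [piOf, piOf, if_neg h0, if_neg h1']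
    apply Nat.add_lt_add_left
    apply Finset.card_lt_card
    constructor
    · exact Finset.filter_subset_filter _ (Finset.Icc_subset_Icc_right hlt.le)
    · intro hsub
      have : l2 ∈ (Finset.Icc 1 l2).filter (fun l => ν l = 1) := by
        simp only [Finset.mem_filter, Finset.mem_Icc]
        refine ⟨⟨le_trans hl1 hlt.le, le_refl _⟩, ?_⟩
        rcases hν l2 (le_trans hl1 hlt.le) hl2h with h0b | h1b
        · exact absurd h0b (fun hx => h0 (hc.mpr hx))
        · exact h1b
      have := hsub this
      simp only [Finset.mem_filter, Finset.mem_Icc] at this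
      omega

lemma piOf_injOn (hν : ∀ i, 1 ≤ i → i ≤ h → ν i = 0 ∨ ν i = 1)
    {l1 l2 : ℕ} (h11 : 1 ≤ l1) (h12 : l1 ≤ h) (h21 : 1 ≤ l2) (h22 : l2 ≤ h)
    (heq : piOf h ν l1 = piOf h ν l2) : l1 = l2 := by
  by_contra hne
  have key : ∀ a b : ℕ, 1 ≤ a → a ≤ h → 1 ≤ b → b ≤ h → a < b →
      piOf h ν a = piOf h ν b → False := by
    intro a b ha1 ha2 hb1 hb2 hab he
    by_cases hc : ν a = 0 ↔ ν b = 0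
    · exact absurd he (piOf_strict_mono h ν hν ha1 hb2 hab hc).ne
    · rcases hν a ha1 ha2 with h0a | h1a <;> rcases hν b hb1 hb2 with h0b | h1b
      · exact hc (by simp [h0a, h0b])
      · have := (piOf_le_d h ν ha1 ha2 h0a).2
        have := (d_lt_piOf h ν hb1 hb2 h1b).1
        omega
      · have := (piOf_le_d h ν hb1 hb2 h0b).2
        have := (d_lt_piOf h ν ha1 ha2 h1a).1
        omega
      · exact hc (by simp [h1a, h1b])
  rcases Nat.lt_or_ge l1 l2 with hlt | hge
  · exact key l1 l2 h11 h12 h21 h22 hlt heq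
  · exact key l2 l1 h21 h22 h11 h12 (by omega) heq.symm

lemma piOf_surj (hν : ∀ i, 1 ≤ i → i ≤ h → ν i = 0 ∨ ν i = 1)
    {i : ℕ} (hi1 : 1 ≤ i) (hi2 : i ≤ h) : ∃ l, 1 ≤ l ∧ l ≤ h ∧ piOf h ν l = i := by
  have := Finset.surj_on_of_inj_on_of_card_le (s := Finset.Icc 1 h) (t := Finset.Icc 1 h)
    (f := fun l _ => piOf h ν l)
    (fun a ha => by
      simp only [Finset.mem_Icc] at ha ⊢
      exact piOf_mem h ν hν ha.1 ha.2)
    (fun a b ha hb he => by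
      simp only [Finset.mem_Icc] at ha hb
      exact piOf_injOn h ν hν ha.1 ha.2 hb.1 hb.2 he)
    le_rfl i (by simp [Finset.mem_Icc, hi1, hi2])
  obtain ⟨l, hl, he⟩ := this
  simp only [Finset.mem_Icc] at hl
  exact ⟨l, hl.1, hl.2, he.symm⟩


/-- The inverse of `π` on `{1,…,h}` (chosen by the unique preimage when it exists). -/
noncomputable def piInv (h : ℕ) (ν : ℕ → ℕ) (i : ℕ) : ℕ :=
  if hex : ∃ l, 1 ≤ l ∧ l ≤ h ∧ piOf h ν l = i then hex.choose else 0


variable {h ν} in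
lemma piInv_spec (hν : ∀ i, 1 ≤ i → i ≤ h → ν i = 0 ∨ ν i = 1)
    {i : ℕ} (hi1 : 1 ≤ i) (hi2 : i ≤ h) :
    1 ≤ piInv h ν i ∧ piInv h ν i ≤ h ∧ piOf h ν (piInv h ν i) = i := by
  have hex := piOf_surj h ν hν hi1 hi2
  rw [piInv, dif_pos hex]
  exact hex.choose_spec

variable {h ν} in
lemma nu_piInv_eq_zero_iff (hν : ∀ i, 1 ≤ i → i ≤ h → ν i = 0 ∨ ν i = 1)
    {i : ℕ} (hi1 : 1 ≤ i) (hi2 : i ≤ h) :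
    ν (piInv h ν i) = 0 ↔ i ≤ dzero h ν := by
  obtain ⟨hl1, hl2, he⟩ := piInv_spec hν hi1 hi2
  rcases hν _ hl1 hl2 with h0 | h1
  · have := (piOf_le_d h ν hl1 hl2 h0).2
    simp only [h0, true_iff]
    omega
  · have := (d_lt_piOf h ν hl1 hl2 h1).1
    rw [h1]
    constructor
    · intro hx; omega
    · intro hx; omega

variable {h ν} in
lemma piInv_strict_mono (hν : ∀ i, 1 ≤ i → i ≤ h → ν i = 0 ∨ ν i = 1)
    {i j : ℕ} (hi1 : 1 ≤ i) (hi2 : i ≤ h) (hj1 : 1 ≤ j) (hj2 : j ≤ h) (hij : i < j)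
    (hc : ν (piInv h ν i) = ν (piInv h ν j)) : piInv h ν i < piInv h ν j := by
  obtain ⟨ha1, ha2, hea⟩ := piInv_spec hν hi1 hi2
  obtain ⟨hb1, hb2, heb⟩ := piInv_spec hν hj1 hj2
  rcases Nat.lt_or_ge (piInv h ν i) (piInv h ν j) with hlt | hge
  · exact hlt
  · exfalso
    have hmono := piOf_mono h ν hge (by rw [hc])
    rw [hea, heb] at hmono
    omega

variable {h ν} in
lemma iter_mem (hν : ∀ i, 1 ≤ i → i ≤ h → ν i = 0 ∨ ν i = 1)
    {i : ℕ} (hi1 : 1 ≤ i) (hi2 : i ≤ h) (k : ℕ) :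
    1 ≤ (piInv h ν)^[k] i ∧ (piInv h ν)^[k] i ≤ h := by
  induction k with
  | zero => exact ⟨hi1, hi2⟩
  | succ n ih =>
    rw [Function.iterate_succ_apply']
    obtain ⟨h1, h2, _⟩ := piInv_spec hν ih.1 ih.2
    exact ⟨h1, h2⟩


/-- The binary expansion `b(i) = ∑_{k ≥ 1} ν(π^{-k}(i)) · 2^{-k}`. -/
noncomputable def bOf (h : ℕ) (ν : ℕ → ℕ) (i : ℕ) : ℝ :=
  ∑' k : ℕ, (ν ((piInv h ν)^[k + 1] i) : ℝ) / 2 ^ (k + 1)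


variable {h ν} in
lemma nu_le_one (hν : ∀ i, 1 ≤ i → i ≤ h → ν i = 0 ∨ ν i = 1)
    {i : ℕ} (hi1 : 1 ≤ i) (hi2 : i ≤ h) (k : ℕ) :
    (ν ((piInv h ν)^[k] i) : ℝ) ≤ 1 := by
  obtain ⟨h1, h2⟩ := iter_mem hν hi1 hi2 k
  rcases hν _ h1 h2 with h0 | h1' <;> simp [*]

variable {h ν} in
lemma term_le (hν : ∀ i, 1 ≤ i → i ≤ h → ν i = 0 ∨ ν i = 1)
    {i : ℕ} (hi1 : 1 ≤ i) (hi2 : i ≤ h) (k : ℕ) :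
    (ν ((piInv h ν)^[k + 1] i) : ℝ) / 2 ^ (k + 1) ≤ ((1:ℝ)/2) ^ (k + 1) := by
  rw [div_pow, one_pow]
  exact (div_le_div_iff_of_pos_right (by positivity)).mpr (nu_le_one hν hi1 hi2 (k+1))

variable {h ν} in
lemma bOf_summable (hν : ∀ i, 1 ≤ i → i ≤ h → ν i = 0 ∨ ν i = 1)
    {i : ℕ} (hi1 : 1 ≤ i) (hi2 : i ≤ h) :
    Summable (fun k : ℕ => (ν ((piInv h ν)^[k + 1] i) : ℝ) / 2 ^ (k + 1)) := by
  refine Summable.of_nonneg_of_le (f := fun k : ℕ => ((1:ℝ)/2) ^ (k+1))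
    (fun k => by positivity) (fun k => term_le hν hi1 hi2 k) ?_
  have : Summable (fun k : ℕ => ((1:ℝ)/2) ^ k) := summable_geometric_two
  exact (this.mul_right (1/2)).congr (fun k => (pow_succ _ _).symm)

lemma geo_tsum : ∑' k : ℕ, ((1:ℝ)/2) ^ (k + 1) = 1 := by
  have : (fun k : ℕ => ((1:ℝ)/2) ^ (k + 1)) = fun k : ℕ => ((1:ℝ)/2) ^ k * (1/2) := by
    funext k; rw [pow_succ]
  rw [this, tsum_mul_right, tsum_geometric_two]
  norm_num

variable {h ν} in
lemma bOf_nonneg {i : ℕ} : 0 ≤ bOf h ν i :=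
  tsum_nonneg (fun k => by positivity)

variable {h ν} in
lemma bOf_le_one (hν : ∀ i, 1 ≤ i → i ≤ h → ν i = 0 ∨ ν i = 1)
    {i : ℕ} (hi1 : 1 ≤ i) (hi2 : i ≤ h) : bOf h ν i ≤ 1 := by
  rw [bOf, ← geo_tsum]
  have hg : Summable (fun k : ℕ => ((1:ℝ)/2) ^ (k + 1)) := by
    have : Summable (fun k : ℕ => ((1:ℝ)/2) ^ k) := summable_geometric_two
    exact (this.mul_right (1/2)).congr (fun k => (pow_succ _ _).symm)
  exact Summable.tsum_le_tsum (fun k => term_le hν hi1 hi2 k) (bOf_summable hν hi1 hi2) hg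

variable {h ν} in
lemma bOf_rec (hν : ∀ i, 1 ≤ i → i ≤ h → ν i = 0 ∨ ν i = 1)
    {i : ℕ} (hi1 : 1 ≤ i) (hi2 : i ≤ h) :
    bOf h ν i = ((ν (piInv h ν i) : ℝ) + bOf h ν (piInv h ν i)) / 2 := by
  have hs := bOf_summable hν hi1 hi2
  rw [bOf, Summable.tsum_eq_zero_add hs]
  have hterm : ∀ k : ℕ, (ν ((piInv h ν)^[k + 1 + 1] i) : ℝ) / 2 ^ (k + 1 + 1)
      = (1/2 : ℝ) * ((ν ((piInv h ν)^[k + 1] (piInv h ν i)) : ℝ) / 2 ^ (k + 1)) := by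
    intro k
    rw [show (piInv h ν)^[k + 1 + 1] i = (piInv h ν)^[k + 1] (piInv h ν i) by
      rw [Function.iterate_succ_apply]]
    ring
  rw [tsum_congr hterm, tsum_mul_left]
  rw [show (piInv h ν)^[0 + 1] i = piInv h ν i by simp]
  rw [← bOf]
  ring

variable {h ν} in
lemma key (hν : ∀ i, 1 ≤ i → i ≤ h → ν i = 0 ∨ ν i = 1) :
    ∀ k : ℕ, ∀ i j : ℕ, 1 ≤ i → i ≤ h → 1 ≤ j → j ≤ h → i < j →
    bOf h ν i ≠ bOf h ν j →
    (∀ m, m < k → ν ((piInv h ν)^[m + 1] i) = ν ((piInv h ν)^[m + 1] j)) →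
    ν ((piInv h ν)^[k + 1] i) ≠ ν ((piInv h ν)^[k + 1] j) →
    bOf h ν i < bOf h ν j := by
  intro k
  induction k with
  | zero =>
    intro i j hi1 hi2 hj1 hj2 hij hb _ hdiff
    simp only [Function.iterate_one, zero_add] at hdiff
    -- first bits differ: ν (piInv i) = 0, ν (piInv j) = 1
    have hzi : ν (piInv h ν i) = 0 := by
      obtain ⟨ha1, ha2, _⟩ := piInv_spec hν hi1 hi2
      obtain ⟨hb1, hb2, _⟩ := piInv_spec hν hj1 hj2
      rcases hν _ ha1 ha2 with h0 | h1
      · exact h0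
      · exfalso
        rcases hν _ hb1 hb2 with h0' | h1'
        · -- ν(piInv i)=1, ν(piInv j)=0 : then d < i and j ≤ d, contradiction
          have hdi : ¬ i ≤ dzero h ν := by
            intro hle
            have := (nu_piInv_eq_zero_iff hν hi1 hi2).mpr hle
            omega
          have hdj : j ≤ dzero h ν := (nu_piInv_eq_zero_iff hν hj1 hj2).mp h0'
          omega
        · exact hdiff (by rw [h1, h1'])
    have hzj : ν (piInv h ν j) = 1 := by
      obtain ⟨hb1, hb2, _⟩ := piInv_spec hν hj1 hj2
      rcases hν _ hb1 hb2 with h0' | h1'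
      · exact absurd (hzi.trans h0'.symm) hdiff
      · exact h1'
    obtain ⟨ha1, ha2, _⟩ := piInv_spec hν hi1 hi2
    obtain ⟨hb1, hb2, _⟩ := piInv_spec hν hj1 hj2
    rw [bOf_rec hν hi1 hi2, bOf_rec hν hj1 hj2] at hb ⊢
    rw [hzi, hzj] at hb ⊢
    have h1 : bOf h ν (piInv h ν i) ≤ 1 := bOf_le_one hν ha1 ha2
    have h2 : (0:ℝ) ≤ bOf h ν (piInv h ν j) := bOf_nonneg
    push_cast at hb ⊢
    rcases lt_or_eq_of_le (by linarith : ((0:ℝ) + bOf h ν (piInv h ν i)) / 2 ≤ (1 + bOf h ν (piInv h ν j)) / 2) with hlt | heq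
    · exact hlt
    · exact absurd heq hb
  | succ n ih =>
    intro i j hi1 hi2 hj1 hj2 hij hb hagree hdiff
    have hc : ν (piInv h ν i) = ν (piInv h ν j) := by
      have := hagree 0 (Nat.succ_pos n)
      simpa using this
    have hlt := piInv_strict_mono hν hi1 hi2 hj1 hj2 hij hc
    obtain ⟨ha1, ha2, _⟩ := piInv_spec hν hi1 hi2
    obtain ⟨hb1, hb2, _⟩ := piInv_spec hν hj1 hj2
    have hreci := bOf_rec hν hi1 hi2
    have hrecj := bOf_rec hν hj1 hj2
    have hb' : bOf h ν (piInv h ν i) ≠ bOf h ν (piInv h ν j) := by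
      intro he
      apply hb
      rw [hreci, hrecj, hc, he]
    have hlt' : bOf h ν (piInv h ν i) < bOf h ν (piInv h ν j) := by
      apply ih (piInv h ν i) (piInv h ν j) ha1 ha2 hb1 hb2 hlt hb'
      · intro m hm
        have := hagree (m + 1) (by omega)
        rwa [Function.iterate_succ_apply, Function.iterate_succ_apply] at this
      · rw [← Function.iterate_succ_apply (piInv h ν) (n+1) i,
          ← Function.iterate_succ_apply (piInv h ν) (n+1) j]
        exact hdiff
    rw [hreci, hrecj, hc]
    have : (0:ℝ) < 2 := by norm_num
    apply div_lt_div_of_pos_right ?_ this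
    · linarith

variable {h ν} in
lemma bOf_lt_of_lt (hν : ∀ i, 1 ≤ i → i ≤ h → ν i = 0 ∨ ν i = 1)
    {i j : ℕ} (hi1 : 1 ≤ i) (hi2 : i ≤ h) (hj1 : 1 ≤ j) (hj2 : j ≤ h)
    (hij : i < j) (hb : bOf h ν i ≠ bOf h ν j) : bOf h ν i < bOf h ν j := by
  have hex : ∃ k, ν ((piInv h ν)^[k + 1] i) ≠ ν ((piInv h ν)^[k + 1] j) := by
    by_contra hno
    push_neg at hno
    apply hb
    exact tsum_congr (fun k => by rw [hno k])
  classical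
  refine key hν (Nat.find hex) i j hi1 hi2 hj1 hj2 hij hb
    (fun m hm => by
      have := Nat.find_min hex hm
      push_neg at this
      exact this)
    (Nat.find_spec hex)



/-- for the admissible arrowed binary sequence attached to `ν : {1,…,h} → {0,1}`
and `i, j ∈ {1,…,h}` with `b(i) ≠ b(j)`, one has `b(i) < b(j) ↔ i < j`. -/
theorem statement1 (h : ℕ) (hh : 1 ≤ h) (ν : ℕ → ℕ)
    (hν : ∀ i, 1 ≤ i → i ≤ h → ν i = 0 ∨ ν i = 1)
    (i j : ℕ) (hi1 : 1 ≤ i) (hi2 : i ≤ h) (hj1 : 1 ≤ j) (hj2 : j ≤ h)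
    (hb : bOf h ν i ≠ bOf h ν j) :
    bOf h ν i < bOf h ν j ↔ i < j := by
  constructor
  · intro hlt
    rcases lt_trichotomy i j with h1 | h2 | h3
    · exact h1
    · exact absurd (by rw [h2]) hb
    · exact absurd (bOf_lt_of_lt hν hj1 hj2 hi1 hi2 h3 hb.symm) (not_lt_of_gt hlt)
  · exact fun hij => bOf_lt_of_lt hν hi1 hi2 hj1 hj2 hij hb
end
end

section
/- Let ξ = ((m_1,n_1),(m_2,n_2)) be a Newton polygon with two segments such that m_r ≤ n_r for r = 1,2, let ξ^C = ((m_1,n_1−m_1),(m_2,n_2−m_2)) be its curtailment, and let φ : T(ξ^C) → T(ξ) be φ(r,i) = (r,i). Write δ_S, π_S for the data of S(ξ) and δ_R, π_R for the data of S(ξ^C). Then: (a) δ_S(φ(t)) = δ_R(t) for all t ∈ T(ξ^C), and {φ(t) : t ∈ T(ξ^C), δ_R(t) = 1} = {s ∈ T(ξ) : δ_S(s) = 1}; (b) T(ξ) \ φ(T(ξ^C)) = {π_S(s) : s ∈ T(ξ), δ_S(s) = 1}; (c) for t ∈ T(ξ^C), φ(π_R(t)) = π_S(φ(t)) if δ_R(t)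 = 0, and φ(π_R(t)) = π_S(π_S(φ(t))) if δ_R(t) = 1. -/
open scoped Classical

noncomputable section

/-- Symbols `(r, i)` (1-indexed component `r`, 1-indexed position `i`). -/
abbrev Symb : Type := ℕ × ℕ

/-- A Newton polygon: a finite list of coprime pairs `(m_r, n_r)` with `m_r + n_r > 0`
and weakly decreasing slopes `n_r / (m_r + n_r)`. -/
structure NewtonPolygon where
  seg : List (ℕ × ℕ)
  coprime : ∀ p ∈ seg, Nat.Coprime p.1 p.2
  pos : ∀ p ∈ seg, 0 < p.1 + p.2
  slopes : ∀ r q : Fin seg.length, r ≤ q →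
    ((seg.get q).2 : ℚ) / (((seg.get q).1 : ℚ) + ((seg.get q).2 : ℚ)) ≤
      ((seg.get r).2 : ℚ) / (((seg.get r).1 : ℚ) + ((seg.get r).2 : ℚ))

namespace NewtonPolygon

/-- The number `z` of segments. -/
def z (ξ : NewtonPolygon) : ℕ := ξ.seg.length

/-- `m_r` (1-indexed). -/
def m (ξ : NewtonPolygon) (r : ℕ) : ℕ := (ξ.seg.getD (r - 1) (0, 0)).1

/-- `n_r` (1-indexed). -/
def n (ξ : NewtonPolygon) (r : ℕ) : ℕ := (ξ.seg.getD (r - 1) (0, 0)).2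

/-- `h_r = m_r + n_r`. -/
def h (ξ : NewtonPolygon) (r : ℕ) : ℕ := ξ.m r + ξ.n r

/-- Membership in the symbol set `T(ξ) = {(r,i) : 1 ≤ r ≤ z, 1 ≤ i ≤ h_r}`. -/
def mem (ξ : NewtonPolygon) (t : Symb) : Prop :=
  1 ≤ t.1 ∧ t.1 ≤ ξ.z ∧ 1 ≤ t.2 ∧ t.2 ≤ ξ.h t.1

/-- The symbol set `T(ξ)` as a finset. -/
def Tfin (ξ : NewtonPolygon) : Finset Symb :=
  ((Finset.Icc 1 ξ.z) ×ˢ (Finset.Icc 1 (ξ.seg.foldr (fun p s => p.1 + p.2 + s) 0))).filter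
    (fun t => t.2 ≤ ξ.h t.1)

/-- The map `δ : T(ξ) → {0,1}`; `δ(r,i) = 1` iff `i ≤ m_r`. -/
def dlt (ξ : NewtonPolygon) (t : Symb) : ℕ := if t.2 ≤ ξ.m t.1 then 1 else 0

/-- The bijection `π(r, i) = (r, ((i - m_r - 1) mod h_r) + 1)`. -/
def pmap (ξ : NewtonPolygon) (t : Symb) : Symb :=
  (t.1, (((t.2 : ℤ) - (ξ.m t.1 : ℤ) - 1) % ((ξ.h t.1 : ℤ))).toNat + 1)

/-- The inverse of `π`: `π⁻¹(r, i) = (r, ((i + m_r - 1) mod h_r) + 1)`. -/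
def pinv (ξ : NewtonPolygon) (t : Symb) : Symb :=
  (t.1, (((t.2 : ℤ) + (ξ.m t.1 : ℤ) - 1) % ((ξ.h t.1 : ℤ))).toNat + 1)

/-- Binary expansion `b(t) = ∑_{k ≥ 1} δ(π^{-k}(t)) · 2^{-k}`. -/
def bexp (ξ : NewtonPolygon) (t : Symb) : ℝ :=
  ∑' k : ℕ, (ξ.dlt (ξ.pinv^[k + 1] t) : ℝ) / 2 ^ (k + 1)

/-- The linear order on `T(ξ)`: `t < t'` iff `b(t) < b(t')`, or `b(t) = b(t')` and
`t` is in an earlier component. -/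
def slt (ξ : NewtonPolygon) (t t' : Symb) : Prop :=
  ξ.bexp t < ξ.bexp t' ∨ (ξ.bexp t = ξ.bexp t' ∧ t.1 < t'.1)

/-- The length `ℓ(ξ)`: the number of pairs `t < t'` with `δ(t) = 0` and `δ(t') = 1`. -/
def len (ξ : NewtonPolygon) : ℕ :=
  ((ξ.Tfin ×ˢ ξ.Tfin).filter (fun p => ξ.slt p.1 p.2 ∧ ξ.dlt p.1 = 0 ∧ ξ.dlt p.2 = 1)).card

/-- `π' = τ ∘ π`, the permutation of the small modification by `(u, v)`. -/
def pmod (ξ : NewtonPolygon) (u v : Symb) (t : Symb) : Symb := Equiv.swap u v (ξ.pmap t)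

/-- The inverse of `π'`. -/
def pmodInv (ξ : NewtonPolygon) (u v : Symb) (t : Symb) : Symb := ξ.pinv (Equiv.swap u v t)

/-- `b'(t) = ∑_{k ≥ 1} δ(π'^{-k}(t)) · 2^{-k}` of the small modification by `(u, v)`. -/
def bmod (ξ : NewtonPolygon) (u v : Symb) (t : Symb) : ℝ :=
  ∑' k : ℕ, (ξ.dlt ((ξ.pmodInv u v)^[k + 1] t) : ℝ) / 2 ^ (k + 1)

/-- The order of the small modification by `(u, v)`: the order of `S(ξ)` with the
positions of `u` and `v` exchanged. -/
def lt0 (ξ : NewtonPolygon) (u v : Symb) (t t' : Symb) : Prop :=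
  ξ.slt (Equiv.swap u v t) (Equiv.swap u v t')

/-- `R` is a specialization of `S(ξ)` by `(u, v)`: a strict linear order on `T(ξ)`
such that `t ≺ t'` implies `b'(t) ≤ b'(t')`. -/
def IsSpec (ξ : NewtonPolygon) (u v : Symb) (R : Symb → Symb → Prop) : Prop :=
  (∀ t ∈ ξ.Tfin, ¬ R t t) ∧
  (∀ t ∈ ξ.Tfin, ∀ t' ∈ ξ.Tfin, ∀ t'' ∈ ξ.Tfin, R t t' → R t' t'' → R t t'') ∧
  (∀ t ∈ ξ.Tfin, ∀ t' ∈ ξ.Tfin, t ≠ t' → R t t' ∨ R t' t) ∧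
  (∀ t ∈ ξ.Tfin, ∀ t' ∈ ξ.Tfin, R t t' → ξ.bmod u v t ≤ ξ.bmod u v t')

/-- The length `ℓ(≺)` of an order `R`: the number of pairs `t ≺ t'` in `T(ξ)` with
`δ(t) = 0` and `δ(t') = 1`. -/
def lenR (ξ : NewtonPolygon) (R : Symb → Symb → Prop) : ℕ :=
  ((ξ.Tfin ×ˢ ξ.Tfin).filter (fun p => R p.1 p.2 ∧ ξ.dlt p.1 = 0 ∧ ξ.dlt p.2 = 1)).card

/-- There exists a generic specialization of `S(ξ)` by `(u, v)`. -/
def ExGeneric (ξ : NewtonPolygon) (u v : Symb) : Prop :=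
  ∃ R : Symb → Symb → Prop, ξ.IsSpec u v R ∧ (ξ.lenR R : ℤ) = (ξ.len : ℤ) - 1

/-- `α_k = π'^k(u)`. -/
def alpha (ξ : NewtonPolygon) (u v : Symb) (k : ℕ) : Symb := (ξ.pmod u v)^[k] u

/-- `β_k = π'^k(v)`. -/
def beta (ξ : NewtonPolygon) (u v : Symb) (k : ℕ) : Symb := (ξ.pmod u v)^[k] v

/-- The set `A_k` computed with respect to an order `R`. -/
def AsetOf (ξ : NewtonPolygon) (u v : Symb) (R : Symb → Symb → Prop) (k : ℕ) : Finset Symb :=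
  ξ.Tfin.filter (fun t =>
    (if k = 0 then ξ.dlt t = 0 else t.1 ≠ v.1 ∧ ξ.dlt t = ξ.dlt (ξ.alpha u v k)) ∧
    R t (ξ.alpha u v k) ∧ R (ξ.alpha u v (k + 1)) (ξ.pmod u v t))

/-- The maximum of a finset for an order `R`. -/
def maxOf (R : Symb → Symb → Prop) (s : Finset Symb) : Symb :=
  if hmax : ∃ t, t ∈ s ∧ ∀ t' ∈ s, t' ≠ t → R t' t then hmax.choose else (0, 0)

/-- The minimum of a finset for an order `R`. -/
def minOf (R : Symb → Symb → Prop) (s : Finset Symb) : Symb :=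
  if hmin : ∃ t, t ∈ s ∧ ∀ t' ∈ s, t' ≠ t → R t t' then hmin.choose else (0, 0)

/-- The pairs `(t, t')` reversed in a step of Construction A: `t = α_k` and
`α_k <_{k-1} t' ≤_{k-1} w` where `w = π'(t_max)`. -/
def revA (R : Symb → Symb → Prop) (a w : Symb) (t t' : Symb) : Prop :=
  t = a ∧ R t t' ∧ (R t' w ∨ t' = w)

/-- One step of Construction A. -/
def stepA (R : Symb → Symb → Prop) (a w : Symb) : Symb → Symb → Prop :=
  fun t t' => (R t t' ∧ ¬ revA R a w t t') ∨ revA R a w t' t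

/-- The pairs `(t, t')` reversed in a step of Construction B: `t' = β_k` and
`w ≤_{k-1} t <_{k-1} β_k` where `w = π'(t_min)`. -/
def revB (R : Symb → Symb → Prop) (b w : Symb) (t t' : Symb) : Prop :=
  t' = b ∧ R t t' ∧ (R w t ∨ t = w)

/-- One step of Construction B. -/
def stepB (R : Symb → Symb → Prop) (b w : Symb) : Symb → Symb → Prop :=
  fun t t' => (R t t' ∧ ¬ revB R b w t t') ∨ revB R b w t' t

/-- The order `<_k` of Construction A (for `k ≥ 1`, meaningful when `A_{k-1} ≠ ∅`). -/
def ordA (ξ : NewtonPolygon) (u v : Symb) : ℕ → Symb → Symb → Prop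
  | 0 => ξ.lt0 u v
  | k + 1 =>
      stepA (ordA ξ u v k) (ξ.alpha u v (k + 1))
        (ξ.pmod u v (maxOf (ordA ξ u v k) (ξ.AsetOf u v (ordA ξ u v k) k)))

/-- The set `A_k` of Construction A. -/
def Aset (ξ : NewtonPolygon) (u v : Symb) (k : ℕ) : Finset Symb :=
  ξ.AsetOf u v (ordA ξ u v k) k

/-- The set `B_k` computed with respect to an order `R`. -/
def BsetOf (ξ : NewtonPolygon) (u v : Symb) (R : Symb → Symb → Prop) (k : ℕ) : Finset Symb :=
  ξ.Tfin.filter (fun t =>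
    (if k = 0 then ξ.dlt t = 1 else ξ.dlt t = ξ.dlt (ξ.beta u v k)) ∧
    R (ξ.beta u v k) t ∧ R (ξ.pmod u v t) (ξ.beta u v (k + 1)))

/-- The order `<_{a+k}` of Construction B (for `k ≥ 1`, meaningful when `B_{k-1} ≠ ∅`). -/
def ordB (ξ : NewtonPolygon) (u v : Symb) (a : ℕ) : ℕ → Symb → Symb → Prop
  | 0 => ordA ξ u v a
  | k + 1 =>
      stepB (ordB ξ u v a k) (ξ.beta u v (k + 1))
        (ξ.pmod u v (minOf (ordB ξ u v a k) (ξ.BsetOf u v (ordB ξ u v a k) k)))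

/-- The set `B_k` of Construction B. -/
def Bset (ξ : NewtonPolygon) (u v : Symb) (a k : ℕ) : Finset Symb :=
  ξ.BsetOf u v (ordB ξ u v a k) k

end NewtonPolygon

lemma mod_calc (i M H : ℕ) (h1 : 1 ≤ i) (hiH : i ≤ H) (hMH : M ≤ H) :
    ((((i : ℤ) - (M : ℤ) - 1) % (H : ℤ)).toNat + 1) = if i ≤ M then i + H - M else i - M := by
  split
  · next h =>
    have e : ((i : ℤ) - M - 1) % H = (i : ℤ) - M - 1 + H := by
      have e2 : ((i : ℤ) - M - 1 + H) % H = ((i : ℤ) - M - 1) % H := by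
        simp [Int.add_emod]
      rw [← e2]
      exact Int.emod_eq_of_lt (by omega) (by omega)
    rw [e]; omega
  · next h =>
    have e : ((i : ℤ) - M - 1) % H = (i : ℤ) - M - 1 :=
      Int.emod_eq_of_lt (by omega) (by omega)
    rw [e]; omega

lemma pmap_val (P : NewtonPolygon) (r i : ℕ) (h1 : 1 ≤ i) (h2 : i ≤ P.h r) :
    P.pmap (r, i) = (r, if i ≤ P.m r then i + P.h r - P.m r else i - P.m r) := by
  have hMH : P.m r ≤ P.h r := by simp [NewtonPolygon.h]
  unfold NewtonPolygon.pmap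
  exact congrArg (Prod.mk r) (mod_calc i (P.m r) (P.h r) h1 h2 hMH)

lemma dlt_one (P : NewtonPolygon) (t : Symb) : P.dlt t = 1 ↔ t.2 ≤ P.m t.1 := by
  unfold NewtonPolygon.dlt; split <;> simp_all

lemma dlt_zero (P : NewtonPolygon) (t : Symb) : P.dlt t = 0 ↔ ¬ t.2 ≤ P.m t.1 := by
  unfold NewtonPolygon.dlt; split <;> simp_all

lemma Tfin_pair (P : NewtonPolygon) (a b c d : ℕ) (hP : P.seg = [(a, b), (c, d)]) (r i : ℕ) :
    (r, i) ∈ P.Tfin ↔ (r = 1 ∧ 1 ≤ i ∧ i ≤ a + b) ∨ (r = 2 ∧ 1 ≤ i ∧ i ≤ c + d) := by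
  have hz : P.z = 2 := by simp [NewtonPolygon.z, hP]
  have hh1 : P.h 1 = a + b := by
    simp [NewtonPolygon.h, NewtonPolygon.m, NewtonPolygon.n, hP]
  have hh2 : P.h 2 = c + d := by
    simp [NewtonPolygon.h, NewtonPolygon.m, NewtonPolygon.n, hP]
  unfold NewtonPolygon.Tfin
  rw [hP]
  simp only [Finset.mem_filter, Finset.mem_product, Finset.mem_Icc, hz, List.foldr]
  constructor
  · rintro ⟨⟨⟨hr1, hr2⟩, hi1, _⟩, hih⟩
    interval_cases r
    · exact Or.inl ⟨rfl, hi1, by rw [hh1] at hih; exact hih⟩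
    · exact Or.inr ⟨rfl, hi1, by rw [hh2] at hih; exact hih⟩
  · rintro (⟨rfl, hi1, hi2⟩ | ⟨rfl, hi1, hi2⟩)
    · exact ⟨⟨⟨le_refl 1, by omega⟩, hi1, by omega⟩, by rw [hh1]; exact hi2⟩
    · exact ⟨⟨⟨by omega, le_refl 2⟩, hi1, by omega⟩, by rw [hh2]; exact hi2⟩


lemma dlt_one' (P : NewtonPolygon) (r i : ℕ) : P.dlt (r, i) = 1 ↔ i ≤ P.m r :=
  dlt_one P (r, i)

lemma dlt_zero' (P : NewtonPolygon) (r i : ℕ) : P.dlt (r, i) = 0 ↔ ¬ i ≤ P.m r :=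
  dlt_zero P (r, i)

lemma Tfin_mem (P : NewtonPolygon) (a b c d : ℕ) (hP : P.seg = [(a, b), (c, d)]) (t : Symb) :
    t ∈ P.Tfin ↔ (t.1 = 1 ∧ 1 ≤ t.2 ∧ t.2 ≤ a + b) ∨ (t.1 = 2 ∧ 1 ≤ t.2 ∧ t.2 ≤ c + d) := by
  obtain ⟨r, i⟩ := t
  exact Tfin_pair P a b c d hP r i

/-- relation between the data of `S(ξ)` and `S(ξ^C)` under the inclusion
`φ(r,i) = (r,i)`:
(a) `δ_S ∘ φ = δ_R` and the `δ = 1` parts of `T(ξ^C)` and `T(ξ)` coincide;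
(b) `T(ξ) ∖ φ(T(ξ^C)) = {π_S(s) : s ∈ T(ξ), δ_S(s) = 1}`;
(c) `φ(π_R(t)) = π_S(φ(t))` if `δ_R(t) = 0` and `φ(π_R(t)) = π_S(π_S(φ(t)))` if `δ_R(t) = 1`. -/
theorem statement5 (ξ ξC : NewtonPolygon) (m1 n1 m2 n2 : ℕ)
    (hseg : ξ.seg = [(m1, n1), (m2, n2)]) (hm1 : m1 ≤ n1) (hm2 : m2 ≤ n2)
    (hsegC : ξC.seg = [(m1, n1 - m1), (m2, n2 - m2)]) :
    (∀ t : Symb, ξC.mem t → ξ.dlt t = ξC.dlt t) ∧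
    (ξC.Tfin.filter (fun t => ξC.dlt t = 1) = ξ.Tfin.filter (fun t => ξ.dlt t = 1)) ∧
    (ξ.Tfin \ ξC.Tfin = (ξ.Tfin.filter (fun s => ξ.dlt s = 1)).image ξ.pmap) ∧
    (∀ t : Symb, ξC.mem t →
      (ξC.dlt t = 0 → ξC.pmap t = ξ.pmap t) ∧
      (ξC.dlt t = 1 → ξC.pmap t = ξ.pmap (ξ.pmap t))) := by
  have hmE : ∀ r, ξ.m r = ξC.m r := by
    intro r
    unfold NewtonPolygon.m
    rw [hseg, hsegC]
    rcases r with _ | _ | _ | r <;> simp [List.getD]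
  have hm1' : ξ.m 1 = m1 := by simp [NewtonPolygon.m, hseg]
  have hm2' : ξ.m 2 = m2 := by simp [NewtonPolygon.m, hseg]
  have hmC1 : ξC.m 1 = m1 := by simp [NewtonPolygon.m, hsegC]
  have hmC2 : ξC.m 2 = m2 := by simp [NewtonPolygon.m, hsegC]
  have hh1 : ξ.h 1 = m1 + n1 := by
    simp [NewtonPolygon.h, NewtonPolygon.m, NewtonPolygon.n, hseg]
  have hh2 : ξ.h 2 = m2 + n2 := by
    simp [NewtonPolygon.h, NewtonPolygon.m, NewtonPolygon.n, hseg]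
  have hC1 : ξC.h 1 = n1 := by
    simp only [NewtonPolygon.h, NewtonPolygon.m, NewtonPolygon.n, hsegC]
    simp [List.getD]
    omega
  have hC2 : ξC.h 2 = n2 := by
    simp only [NewtonPolygon.h, NewtonPolygon.m, NewtonPolygon.n, hsegC]
    simp [List.getD]
    omega
  have hzC : ξC.z = 2 := by simp [NewtonPolygon.z, hsegC]
  refine ⟨?_, ?_, ?_, ?_⟩
  · intro t _
    unfold NewtonPolygon.dlt
    rw [hmE]
  · ext ⟨r, i⟩
    simp only [Finset.mem_filter, Tfin_pair ξC m1 (n1 - m1) m2 (n2 - m2) hsegC,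
      Tfin_pair ξ m1 n1 m2 n2 hseg, dlt_one']
    constructor
    · rintro ⟨(⟨rfl, hi1, hi2⟩ | ⟨rfl, hi1, hi2⟩), hd⟩
      · rw [hmC1] at hd; rw [hm1']; exact ⟨Or.inl ⟨rfl, hi1, by omega⟩, hd⟩
      · rw [hmC2] at hd; rw [hm2']; exact ⟨Or.inr ⟨rfl, hi1, by omega⟩, hd⟩
    · rintro ⟨(⟨rfl, hi1, hi2⟩ | ⟨rfl, hi1, hi2⟩), hd⟩
      · rw [hm1'] at hd; rw [hmC1]; exact ⟨Or.inl ⟨rfl, hi1, by omega⟩, hd⟩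
      · rw [hm2'] at hd; rw [hmC2]; exact ⟨Or.inr ⟨rfl, hi1, by omega⟩, hd⟩
  · ext ⟨r, i⟩
    simp only [Finset.mem_sdiff, Finset.mem_image, Finset.mem_filter,
      Tfin_mem ξC m1 (n1 - m1) m2 (n2 - m2) hsegC, Tfin_mem ξ m1 n1 m2 n2 hseg]
    constructor
    · rintro ⟨(⟨hr, hi1, hi2⟩ | ⟨hr, hi1, hi2⟩), hnC⟩
      · subst hr
        have hni : n1 < i := by
          by_contra hle
          exact hnC (Or.inl ⟨rfl, hi1, by omega⟩)
        refine ⟨(1, i - n1), ⟨Or.inl ⟨rfl, by omega, by omega⟩, ?_⟩, ?_⟩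
        · rw [dlt_one', hm1']; omega
        · rw [pmap_val ξ 1 (i - n1) (by omega) (by rw [hh1]; omega), hm1', hh1,
            if_pos (by omega : i - n1 ≤ m1)]
          exact congrArg _ (by omega)
      · subst hr
        have hni : n2 < i := by
          by_contra hle
          exact hnC (Or.inr ⟨rfl, hi1, by omega⟩)
        refine ⟨(2, i - n2), ⟨Or.inr ⟨rfl, by omega, by omega⟩, ?_⟩, ?_⟩
        · rw [dlt_one', hm2']; omega
        · rw [pmap_val ξ 2 (i - n2) (by omega) (by rw [hh2]; omega), hm2', hh2,
            if_pos (by omega : i - n2 ≤ m2)]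
          exact congrArg _ (by omega)
    · rintro ⟨⟨q, j⟩, ⟨(⟨hq, hj1, hj2⟩ | ⟨hq, hj1, hj2⟩), hd⟩, hpm⟩
      · subst hq
        rw [dlt_one', hm1'] at hd
        rw [pmap_val ξ 1 j (by omega) (by rw [hh1]; omega), hm1', hh1, if_pos hd] at hpm
        simp only [Prod.mk.injEq] at hpm
        obtain ⟨rfl, rfl⟩ := hpm
        refine ⟨Or.inl ⟨rfl, by omega, by omega⟩, ?_⟩
        rintro (⟨_, _, hle⟩ | ⟨he, _⟩) <;> omega
      · subst hq
        rw [dlt_one', hm2'] at hd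
        rw [pmap_val ξ 2 j (by omega) (by rw [hh2]; omega), hm2', hh2, if_pos hd] at hpm
        simp only [Prod.mk.injEq] at hpm
        obtain ⟨rfl, rfl⟩ := hpm
        refine ⟨Or.inr ⟨rfl, by omega, by omega⟩, ?_⟩
        rintro (⟨he, _⟩ | ⟨_, _, hle⟩) <;> omega
  · rintro ⟨r, i⟩ ⟨hr1, hr2, hi1, hi2⟩
    rw [hzC] at hr2
    interval_cases r
    · rw [hC1] at hi2
      constructor
      · intro hd0
        rw [dlt_zero', hmC1] at hd0
        rw [pmap_val ξC 1 i hi1 (by rw [hC1]; omega), hmC1, hC1, if_neg hd0,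
          pmap_val ξ 1 i hi1 (by rw [hh1]; omega), hm1', if_neg hd0]
      · intro hd1
        rw [dlt_one', hmC1] at hd1
        rw [pmap_val ξC 1 i hi1 (by rw [hC1]; omega), hmC1, hC1, if_pos hd1,
          pmap_val ξ 1 i hi1 (by rw [hh1]; omega), hm1', hh1, if_pos hd1,
          pmap_val ξ 1 (i + (m1 + n1) - m1) (by omega) (by rw [hh1]; omega), hm1', hh1,
          if_neg (by omega)]
        exact congrArg _ (by omega)
    · rw [hC2] at hi2
      constructor
      · intro hd0
        rw [dlt_zero', hmC2] at hd0
        rw [pmap_val ξC 2 i hi1 (by rw [hC2]; omega), hmC2, hC2, if_neg hd0,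
          pmap_val ξ 2 i hi1 (by rw [hh2]; omega), hm2', if_neg hd0]
      · intro hd1
        rw [dlt_one', hmC2] at hd1
        rw [pmap_val ξC 2 i hi1 (by rw [hC2]; omega), hmC2, hC2, if_pos hd1,
          pmap_val ξ 2 i hi1 (by rw [hh2]; omega), hm2', hh2, if_pos hd1,
          pmap_val ξ 2 (i + (m2 + n2) - m2) (by omega) (by rw [hh2]; omega), hm2', hh2,
          if_neg (by omega)]
        exact congrArg _ (by omega)
end
end
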